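/- For each element w of a Coxeter group W, among the elements of the form w₀(J) (longest elements of finite standard parabolic subgroups) lying below w in weak Bruhat order, there is a unique maximal one; it is w₀(J) where J is the set of simple reflections s with s ≤ w in weak order. -/

import Mathlib

/-- The right weak Bruhat order on a Coxeter group: `u ≤ v` iff `ℓ(u) + ℓ(u⁻¹v) = ℓ(v)`. -/
noncomputable def rweakLE {B W : Type*} [Group W] {M : CoxeterMatrix B}
    (cs : CoxeterSystem M W) (u v : W) : Prop :=
  cs.length u + cs.length (u⁻¹ * v) = cs.length v

/-- The standard parabolic subgroup `W_J` generated by the simple reflections in `J`. -/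
def parabolic {B W : Type*} [Group W] {M : CoxeterMatrix B}
    (cs : CoxeterSystem M W) (J : Set B) : Subgroup W :=
  Subgroup.closure (cs.simple '' J)

/-- `w` is the longest element of the (necessarily finite) parabolic subgroup `W_J`. -/
noncomputable def isLongestOf {B W : Type*} [Group W] {M : CoxeterMatrix B}
    (cs : CoxeterSystem M W) (J : Set B) (w : W) : Prop :=
  w ∈ parabolic cs J ∧ (parabolic cs J : Set W).Finite ∧
    ∀ u ∈ parabolic cs J, cs.length u ≤ cs.length w

namespace SEAux
open CoxeterSystem List
open scoped Classical

variable {B W : Type*} [Group W] {M : CoxeterMatrix B} (cs : CoxeterSystem M W)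

local prefix:100 "s" => cs.simple
local prefix:100 "π" => cs.wordProd
local prefix:100 "ℓ" => cs.length
local prefix:100 "ris" => cs.rightInvSeq

lemma conj_conj (i : B) (t : W) : s i * (s i * t * s i) * s i = t := by
  rw [mul_assoc (s i) t (s i), cs.simple_mul_simple_cancel_left,
    cs.simple_mul_simple_cancel_right]

lemma conj_eq_simple_iff (i : B) (t : W) : s i * t * s i = s i ↔ t = s i := by
  constructor
  · intro h
    have h2 := congrArg (fun x => s i * x * s i) h
    rw [conj_conj] at h2
    rw [h2, cs.simple_mul_simple_self, one_mul]
  · rintro rfl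
    rw [cs.simple_mul_simple_self, one_mul]

/-- The raw map underlying the sign permutation representation. -/
noncomputable def gmap (i : B) : W × ℤˣ → W × ℤˣ :=
  fun p => (s i * p.1 * s i, if p.1 = s i then -p.2 else p.2)

lemma gmap_involutive (i : B) : Function.Involutive (gmap cs i) := by
  rintro ⟨t, ε⟩
  simp only [gmap]
  by_cases ht : t = s i
  · subst ht
    simp [cs.simple_mul_simple_self, conj_conj]
  · rw [if_neg ht, if_neg (fun h => ht ((conj_eq_simple_iff cs i t).mp h))]
    exact Prod.ext (conj_conj cs i t) rfl

/-- The sign permutation attached to a simple reflection. -/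
noncomputable def sperm (i : B) : Equiv.Perm (W × ℤˣ) := (gmap_involutive cs i).toPerm

lemma sperm_apply (i : B) (t : W) (ε : ℤˣ) :
    sperm cs i (t, ε) = (s i * t * s i, if t = s i then -ε else ε) := rfl

lemma semiconj_pow (i j : B) (m : ℕ) :
    s j * (s i * s j) ^ m = (s j * s i) ^ m * s j := by
  have h : SemiconjBy (s j) (s i * s j) (s j * s i) := by
    show s j * (s i * s j) = (s j * s i) * s j
    rw [mul_assoc]
  exact (h.pow_right m).eq

/-- `s j * (s i * s j)^m * s j = (s j * s i)^m`. -/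
lemma simple_conj_pow (i j : B) (m : ℕ) :
    s j * (s i * s j) ^ m * s j = (s j * s i) ^ m := by
  rw [semiconj_pow, mul_assoc, cs.simple_mul_simple_self, mul_one]

lemma pow_inv_simple_conj (i j : B) (m : ℕ) :
    ((s i * s j) ^ m)⁻¹ = (s j * s i) ^ m := by
  rw [← inv_pow, mul_inv_rev, cs.inv_simple, cs.inv_simple]

lemma key_conj_A (i j : B) (m : ℕ) :
    ((s i * s j) ^ m)⁻¹ * s j * (s i * s j) ^ m = (s j * s i) ^ (2 * m) * s j := by
  rw [pow_inv_simple_conj, mul_assoc, semiconj_pow cs i j m, ← mul_assoc, ← pow_add, two_mul]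

lemma key_conj_B (i j : B) (m : ℕ) :
    ((s i * s j) ^ m)⁻¹ * (s j * (s i * s j)) * (s i * s j) ^ m
      = (s j * s i) ^ (2 * m + 1) * s j := by
  have h : s j * (s i * s j) = (s j * s i) * s j := by rw [mul_assoc]
  rw [h, pow_inv_simple_conj]
  calc (s j * s i) ^ m * (s j * s i * s j) * (s i * s j) ^ m
      = (s j * s i) ^ m * (s j * s i) * (s j * (s i * s j) ^ m) := by
        simp only [mul_assoc]
    _ = (s j * s i) ^ (m + 1) * ((s j * s i) ^ m * s j) := by
        rw [semiconj_pow, pow_succ]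
    _ = (s j * s i) ^ (2 * m + 1) * s j := by
        rw [← mul_assoc, ← pow_add]
        congr 2
        omega

lemma conj_eq_iff (g x y : W) : g * x * g⁻¹ = y ↔ x = g⁻¹ * y * g := by
  constructor
  · rintro rfl; group
  · rintro rfl; group

/-- Sign factor sequence for the dihedral computation. -/
noncomputable def delta (i j : B) (t : W) (k : ℕ) : ℤˣ :=
  if t = (s j * s i) ^ k * s j then -1 else 1

lemma mul_delta (i j : B) (t : W) (k : ℕ) (η : ℤˣ) :
    (if t = (s j * s i) ^ k * s j then -η else η) = η * delta cs i j t k := by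
  unfold delta
  by_cases h : t = (s j * s i) ^ k * s j <;> simp [h]

lemma sperm_mul_pow_apply (i j : B) (m : ℕ) (t : W) (ε : ℤˣ) :
    ((sperm cs i * sperm cs j) ^ m) (t, ε) =
      ((s i * s j) ^ m * t * ((s i * s j) ^ m)⁻¹,
        ε * ∏ k ∈ Finset.range (2 * m), delta cs i j t k) := by
  induction m with
  | zero => simp
  | succ m ih =>
    rw [pow_succ', Equiv.Perm.mul_apply, ih, Equiv.Perm.mul_apply]
    set p := s i * s j with hp
    set u := p ^ m * t * (p ^ m)⁻¹ with hu
    have hcondA : (u = s j) ↔ (t = (s j * s i) ^ (2 * m) * s j) := by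
      rw [hu, conj_eq_iff, hp, key_conj_A]
    have hcondB : (s j * u * s j = s i) ↔ (t = (s j * s i) ^ (2 * m + 1) * s j) := by
      nth_rw 2 [← cs.inv_simple j]
      rw [conj_eq_iff, cs.inv_simple, hu, conj_eq_iff, mul_assoc (s j) (s i) (s j),
        hp, key_conj_B]
    rw [sperm_apply cs j u, sperm_apply cs i]
    have h2m : 2 * (m + 1) = (2 * m + 1) + 1 := by ring
    rw [h2m, Finset.prod_range_succ, Finset.prod_range_succ]
    refine Prod.ext ?_ ?_
    · show s i * (s j * u * s j) * s i = p ^ (m + 1) * t * (p ^ (m + 1))⁻¹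
      rw [hu, pow_succ' p m, mul_inv_rev p (p ^ m), hp, mul_inv_rev (s i) (s j),
        cs.inv_simple, cs.inv_simple]
      simp only [mul_assoc]
    · show (if s j * u * s j = s i then -(if u = s j then -(ε * _) else ε * _)
          else (if u = s j then -(ε * _) else ε * _)) = _
      simp only [hcondA, hcondB]
      rw [mul_delta, mul_delta]
      simp [mul_assoc]

lemma sperm_liftable : M.IsLiftable (sperm cs) := by
  intro i j
  rcases Nat.eq_zero_or_pos (M i j) with h0 | hpos
  · rw [h0, pow_zero]
  · apply Equiv.ext
    rintro ⟨t, ε⟩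
    rw [sperm_mul_pow_apply, cs.simple_mul_simple_pow i j]
    have hc : (s j * s i) ^ (M i j) = 1 := cs.simple_mul_simple_pow' i j
    have hdelta : ∀ k, delta cs i j t (M i j + k) = delta cs i j t k := by
      intro k
      unfold delta
      rw [pow_add, hc, one_mul]
    have : ∏ k ∈ Finset.range (2 * M i j), delta cs i j t k = 1 := by
      rw [two_mul, Finset.prod_range_add]
      simp only [hdelta]
      rw [← Finset.prod_mul_distrib]
      apply Finset.prod_eq_one
      intro k _
      exact Int.units_mul_self _
    rw [this, mul_one, one_mul, inv_one, mul_one]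
    rfl

/-- The sign representation of the Coxeter group. -/
noncomputable def srep : W →* Equiv.Perm (W × ℤˣ) := cs.lift ⟨sperm cs, sperm_liftable cs⟩

lemma srep_simple (i : B) : srep cs (s i) = sperm cs i := cs.lift_apply_simple (sperm_liftable cs) i

lemma srep_wordProd (ω : List B) (t : W) (ε : ℤˣ) :
    srep cs (π ω) (t, ε) =
      (π ω * t * (π ω)⁻¹, ε * (-1) ^ (List.count t (ris ω))) := by
  induction ω with
  | nil => simp
  | cons i ω ih =>
    rw [cs.wordProd_cons, map_mul, Equiv.Perm.mul_apply, ih, srep_simple, sperm_apply]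
    have hris : ris (i :: ω) = ((π ω)⁻¹ * s i * π ω) :: ris ω := rfl
    have hcond : (π ω * t * (π ω)⁻¹ = s i) ↔ (t = (π ω)⁻¹ * s i * π ω) := conj_eq_iff _ _ _
    refine Prod.ext ?_ ?_
    · show s i * (π ω * t * (π ω)⁻¹) * s i = (s i * π ω) * t * (s i * π ω)⁻¹
      rw [mul_inv_rev, cs.inv_simple]
      simp only [mul_assoc]
    · show (if π ω * t * (π ω)⁻¹ = s i then -(ε * (-1) ^ (List.count t (ris ω)))
          else ε * (-1) ^ (List.count t (ris ω))) = ε * (-1) ^ (List.count t (ris (i :: ω)))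
      rw [hris, List.count_cons]
      by_cases hmem : t = (π ω)⁻¹ * s i * π ω
      · rw [if_pos (hcond.mpr hmem), if_pos (by exact beq_iff_eq.mpr hmem.symm)]
        rw [pow_add, pow_one]
        simp
      · rw [if_neg (fun h => hmem (hcond.mp h)),
          if_neg (by simpa using fun h => hmem (Eq.symm h))]
        rw [add_zero]

lemma srep_apply_eq (w t : W) (ε : ℤˣ) :
    srep cs w (t, ε) = (w * t * w⁻¹, ε * (srep cs w (t, 1)).2) := by
  obtain ⟨ω, rfl⟩ := cs.wordProd_surjective w
  rw [srep_wordProd, srep_wordProd, one_mul]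

/-- The sign of a reflection `t` relative to `w`. -/
noncomputable def eta (w t : W) : ℤˣ := (srep cs w (t, 1)).2

lemma srep_apply_eta (w t : W) (ε : ℤˣ) :
    srep cs w (t, ε) = (w * t * w⁻¹, ε * eta cs w t) := srep_apply_eq cs w t ε

lemma srep_reflection (t : W) (ht : cs.IsReflection t) (ε : ℤˣ) :
    srep cs t (t, ε) = (t, -ε) := by
  obtain ⟨u, i, rfl⟩ := ht
  set t := u * s i * u⁻¹ with hht
  have h1 : srep cs u⁻¹ (t, ε) = (s i, ε * eta cs u⁻¹ t) := by
    rw [srep_apply_eta]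
    congr 1
    rw [hht]
    group
  have h2 : srep cs u (s i, ε * eta cs u⁻¹ t) = (t, ε * eta cs u⁻¹ t * eta cs u (s i)) := by
    rw [srep_apply_eta]
  have hprod : eta cs u⁻¹ t * eta cs u (s i) = 1 := by
    have h3 : srep cs u (srep cs u⁻¹ (t, ε)) = (t, ε) := by
      rw [← Equiv.Perm.mul_apply, ← map_mul, mul_inv_cancel, map_one, Equiv.Perm.one_apply]
    rw [h1, h2] at h3
    have := congrArg Prod.snd h3
    simp only at this
    rw [mul_assoc] at this
    exact mul_left_cancel (a := ε) (by rw [this, mul_one])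
  calc srep cs t (t, ε) = srep cs u (srep cs (s i) (srep cs u⁻¹ (t, ε))) := by
        rw [← Equiv.Perm.mul_apply, ← Equiv.Perm.mul_apply, ← map_mul, ← map_mul]
    _ = (t, -ε) := by
        rw [h1, srep_simple, sperm_apply, if_pos rfl, cs.simple_mul_simple_self, one_mul,
          srep_apply_eta, ← hht]
        have hs : -(ε * eta cs u⁻¹ t) * eta cs u (s i) = -ε := by
          rw [neg_mul, mul_assoc, hprod, mul_one]
        rw [hs]

lemma mem_ris_of_eta (ω : List B) (t : W) (h : eta cs (π ω) t = -1) : t ∈ ris ω := by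
  unfold eta at h
  rw [srep_wordProd] at h
  simp only [one_mul] at h
  by_contra hmem
  rw [List.count_eq_zero_of_not_mem hmem, pow_zero] at h
  exact absurd h (by decide)

theorem length_mul_reflection_lt_iff_eta (w t : W) (ht : cs.IsReflection t) :
    ℓ (w * t) < ℓ w ↔ eta cs w t = -1 := by
  constructor
  · intro h
    set v := w * t with hv
    have hvt : v * t = w := by rw [hv, mul_assoc, ht.mul_self, mul_one]
    have hkey : eta cs w t = -(eta cs v t) := by
      unfold eta
      rw [← hvt, map_mul, Equiv.Perm.mul_apply, srep_reflection cs t ht, srep_apply_eta]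
      show (-1 : ℤˣ) * eta cs v t = -eta cs v t
      simp
    have hv1 : eta cs v t = 1 := by
      rcases Int.units_eq_one_or (eta cs v t) with h1 | h1
      · exact h1
      · exfalso
        obtain ⟨ω, hred, hw⟩ := cs.exists_reduced_word' v
        rw [hw] at h1
        have hmem := mem_ris_of_eta cs ω t h1
        have := (cs.isRightInversion_of_mem_rightInvSeq hred hmem).2
        rw [← hw, hvt] at this
        omega
    rw [hkey, hv1]
  · intro h
    obtain ⟨ω, hred, hw⟩ := cs.exists_reduced_word' w
    rw [hw] at h ⊢
    exact (cs.isRightInversion_of_mem_rightInvSeq hred (mem_ris_of_eta cs ω t h)).2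

theorem strong_exchange_right (ω : List B) (t : W) (ht : cs.IsReflection t)
    (h : ℓ (π ω * t) < ℓ (π ω)) :
    ∃ j < ω.length, π ω * t = π (ω.eraseIdx j) := by
  have heta := (length_mul_reflection_lt_iff_eta cs (π ω) t ht).mp h
  have hmem := mem_ris_of_eta cs ω t heta
  obtain ⟨j, hj, hget⟩ := List.mem_iff_getElem.mp hmem
  have hj' : j < ω.length := by simpa using hj
  refine ⟨j, hj', ?_⟩
  rw [← cs.wordProd_mul_getD_rightInvSeq ω j]
  congr 1
  rw [List.getD_eq_getElem _ _ hj, hget]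

theorem strong_exchange_left (ω : List B) (t : W) (ht : cs.IsReflection t)
    (h : ℓ (t * π ω) < ℓ (π ω)) :
    ∃ j < ω.length, t * π ω = π ((ω.reverse.eraseIdx j).reverse) := by
  have hinv : ((π ω)⁻¹ * t)⁻¹ = t * π ω := by rw [mul_inv_rev, inv_inv, ht.inv]
  have h' : ℓ (π ω.reverse * t) < ℓ (π ω.reverse) := by
    rw [cs.wordProd_reverse]
    have e1 : ℓ ((π ω)⁻¹ * t) = ℓ (t * π ω) := by
      rw [← cs.length_inv ((π ω)⁻¹ * t), hinv]
    have e2 : ℓ ((π ω)⁻¹) = ℓ (π ω) := cs.length_inv _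
    rw [e1, e2]
    exact h
  obtain ⟨j, hj, heq⟩ := strong_exchange_right cs ω.reverse t ht h'
  refine ⟨j, by simpa using hj, ?_⟩
  have : t * π ω = (π (ω.reverse.eraseIdx j))⁻¹ := by
    rw [← heq, cs.wordProd_reverse, mul_inv_rev, inv_inv, ht.inv]
  rw [this, ← cs.wordProd_reverse]

/-- Exchange for left multiplication by a simple reflection, word form. -/
lemma exchange_left_word {ω : List B} (i : B) (h : ℓ (s i * π ω) < ℓ (π ω)) :
    ∃ ω' : List B, ω'.length + 1 = ω.length ∧ (∀ b ∈ ω', b ∈ ω) ∧ s i * π ω = π ω' := by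
  obtain ⟨j, hj, heq⟩ := strong_exchange_left cs ω (s i) (cs.isReflection_simple i) h
  refine ⟨(ω.reverse.eraseIdx j).reverse, ?_, ?_, heq⟩
  · rw [List.length_reverse, List.length_eraseIdx, if_pos (by simpa using hj)]
    simp only [List.length_reverse]
    omega
  · intro b hb
    rw [List.mem_reverse] at hb
    have := List.eraseIdx_subset (l := ω.reverse) (k := j) hb
    rwa [List.mem_reverse] at this

lemma left_descent_of_isLongest {J : Set B} {m : W} (hm : isLongestOf cs J m) {j : B}
    (hj : j ∈ J) : ℓ (s j * m) < ℓ m := by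
  obtain ⟨hmem, _, hmax⟩ := hm
  have hsj : s j ∈ parabolic cs J := Subgroup.subset_closure ⟨j, hj, rfl⟩
  have h1 : ℓ (s j * m) ≤ ℓ m := hmax _ (mul_mem hsj hmem)
  have h2 := cs.length_simple_mul_ne m j
  omega

-- ### basic weak order facts

lemma rweakLE_refl (w : W) : rweakLE cs w w := by
  simp [rweakLE]

lemma rweakLE_one (w : W) : rweakLE cs 1 w := by
  simp [rweakLE]

lemma rweakLE_trans {u v x : W} (h1 : rweakLE cs u v) (h2 : rweakLE cs v x) :
    rweakLE cs u x := by
  unfold rweakLE at *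
  have t1 := cs.length_mul_le (u⁻¹ * v) (v⁻¹ * x)
  rw [show (u⁻¹ * v) * (v⁻¹ * x) = u⁻¹ * x by group] at t1
  have t2 := cs.length_mul_le u (u⁻¹ * x)
  rw [show u * (u⁻¹ * x) = x by group] at t2
  omega

lemma rweakLE.length_le {u v : W} (h : rweakLE cs u v) : ℓ u ≤ ℓ v := by
  unfold rweakLE at h; omega

lemma rweakLE_simple_iff (i : B) (w : W) :
    rweakLE cs (s i) w ↔ ℓ (s i * w) < ℓ w := by
  unfold rweakLE
  rw [cs.length_simple, cs.inv_simple]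
  have := cs.length_simple_mul w i
  omega

-- ### the lifting property of weak order

lemma lifting {u w : W} {i : B} (hsu : ℓ u < ℓ (s i * u)) (hsw : ℓ (s i * w) < ℓ w)
    (huw : rweakLE cs u w) : rweakLE cs (s i * u) w := by
  obtain ⟨α, hαred, hαu⟩ := cs.exists_reduced_word' u
  obtain ⟨β, hβred, hβx⟩ := cs.exists_reduced_word' (u⁻¹ * w)
  have hw : w = π (α ++ β) := by
    rw [cs.wordProd_append, ← hαu, ← hβx]; group
  have hαlen : ℓ u = α.length := by rw [hαu]; exact hαred
  have hβlen : ℓ (u⁻¹ * w) = β.length := by rw [hβx]; exact hβred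
  have hwlen : ℓ w = α.length + β.length := by
    unfold rweakLE at huw; omega
  have hsiu : ℓ (s i * u) = ℓ u + 1 := by
    have := cs.length_simple_mul u i
    omega
  have hexch : ℓ (s i * π (α ++ β)) < ℓ (π (α ++ β)) := by rw [← hw]; exact hsw
  obtain ⟨j, hj, heq⟩ := strong_exchange_left cs (α ++ β) (s i)
    (cs.isReflection_simple i) hexch
  rw [List.reverse_append] at heq
  rcases lt_or_ge j β.length with hlt | hle
  · -- erase lands in the β part
    rw [List.eraseIdx_append_of_lt_length (by simpa using hlt), List.reverse_append,
      List.reverse_reverse] at heq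
    rw [cs.wordProd_append, cs.wordProd_append] at heq
    set y := π ((β.reverse.eraseIdx j).reverse) with hy
    have hylen : ℓ y ≤ β.length - 1 := by
      calc ℓ y ≤ ((β.reverse.eraseIdx j).reverse).length := cs.length_wordProd_le _
        _ = β.length - 1 := by
            rw [List.length_reverse, List.length_eraseIdx, if_pos (by simpa using hlt)]
            simp
    have h1 : s i * w = u * y := by
      rw [hw, cs.wordProd_append, heq, hαu]
    have hkey : (s i * u)⁻¹ * w = y := by
      calc (s i * u)⁻¹ * w = u⁻¹ * (s i * w) := by
            rw [mul_inv_rev, cs.inv_simple, mul_assoc]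
        _ = u⁻¹ * (u * y) := by rw [h1]
        _ = y := by group
    have hylen' : ℓ ((s i * u)⁻¹ * w) ≤ β.length - 1 := by rw [hkey]; exact hylen
    have tri : ℓ w ≤ ℓ (s i * u) + ℓ ((s i * u)⁻¹ * w) := by
      have h2 := cs.length_mul_le (s i * u) ((s i * u)⁻¹ * w)
      rw [show (s i * u) * ((s i * u)⁻¹ * w) = w by group] at h2
      exact h2
    unfold rweakLE
    omega
  · -- erase lands in the α part: contradiction
    exfalso
    rw [List.eraseIdx_append_of_length_le (by simpa using hle), List.reverse_append,
      List.reverse_reverse] at heq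
    rw [cs.wordProd_append, cs.wordProd_append] at heq
    rw [show s i * (π α * π β) = (s i * π α) * π β by rw [mul_assoc]] at heq
    have hz : s i * π α = π ((α.reverse.eraseIdx (j - β.reverse.length)).reverse) :=
      mul_right_cancel heq
    have hidx : j - β.reverse.length < α.length := by
      rw [List.length_reverse]
      rw [List.length_append] at hj
      omega
    have hzlen : ℓ (s i * π α) ≤ α.length - 1 := by
      rw [hz]
      calc ℓ (π ((α.reverse.eraseIdx (j - β.reverse.length)).reverse))
          ≤ ((α.reverse.eraseIdx (j - β.reverse.length)).reverse).length :=
            cs.length_wordProd_le _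
        _ = α.length - 1 := by
            rw [List.length_reverse, List.length_eraseIdx,
              if_pos (by simpa using hidx)]
            simp
    rw [← hαu] at hzlen
    omega

-- ### words for elements of parabolic subgroups

lemma exists_word_subset {J : Set B} {u : W} (hu : u ∈ parabolic cs J) :
    ∃ ω : List B, (∀ b ∈ ω, b ∈ J) ∧ u = π ω := by
  induction hu using Subgroup.closure_induction with
  | mem x hx =>
    obtain ⟨j, hj, rfl⟩ := hx
    exact ⟨[j], by simpa using hj, by simp⟩
  | one => exact ⟨[], by simp, by simp⟩
  | mul x y _ _ ihx ihy =>
    obtain ⟨ω₁, h₁, rfl⟩ := ihx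
    obtain ⟨ω₂, h₂, rfl⟩ := ihy
    refine ⟨ω₁ ++ ω₂, ?_, (cs.wordProd_append ω₁ ω₂).symm⟩
    intro b hb
    rcases List.mem_append.mp hb with h | h
    · exact h₁ b h
    · exact h₂ b h
  | inv x _ ihx =>
    obtain ⟨ω, h₁, rfl⟩ := ihx
    exact ⟨ω.reverse, fun b hb => h₁ b (List.mem_reverse.mp hb),
      (cs.wordProd_reverse ω).symm⟩

lemma reduce_word (ω : List B) :
    ∃ ω' : List B, (∀ b ∈ ω', b ∈ ω) ∧ cs.IsReduced ω' ∧ π ω' = π ω := by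
  generalize hn : ω.length = n
  induction n using Nat.strong_induction_on generalizing ω with
  | _ n IH =>
  by_cases hred : cs.IsReduced ω
  · exact ⟨ω, fun b hb => hb, hred, rfl⟩
  · subst hn
    set P : ℕ → Prop := fun c => ¬ cs.IsReduced (ω.drop c) with hP
    have hP0 : P 0 := by simpa [hP] using hred
    set a := Nat.findGreatest P ω.length with ha
    have hPa : P a := Nat.findGreatest_spec (Nat.zero_le _) hP0
    have hPlen : ¬ P ω.length := by
      simp only [hP, List.drop_length, not_not]
      show ℓ (π []) = _
      simp
    have haub : a ≤ ω.length := Nat.findGreatest_le _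
    have halt : a < ω.length := by
      rcases Nat.lt_or_ge a ω.length with h | h
      · exact h
      · exact absurd (le_antisymm haub h ▸ hPa) hPlen
    have hr1 : cs.IsReduced (ω.drop (a + 1)) := by
      by_cases hc : a + 1 ≤ ω.length
      · by_contra hcon
        exact Nat.findGreatest_is_greatest (Nat.lt_succ_self a) hc hcon
      · have : ω.drop (a + 1) = [] := List.drop_eq_nil_of_le (by omega)
        rw [this]
        show ℓ (π []) = _
        simp
    obtain ⟨b, hdrop⟩ : ∃ b, ω.drop a = b :: ω.drop (a + 1) :=
      ⟨ω[a], by rw [List.drop_eq_getElem_cons halt]⟩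
    have hbmem : b ∈ ω := List.mem_of_mem_drop (l := ω) (i := a)
      (hdrop ▸ (List.mem_cons_self (a := b) (l := ω.drop (a + 1))))
    have hlen1 : ℓ (π (ω.drop (a + 1))) = ω.length - (a + 1) := by
      rw [hr1]; simp
    have hne : ℓ (π (ω.drop a)) ≠ ω.length - a := fun h => hPa (by
      show ℓ (π (ω.drop a)) = _
      rw [h, List.length_drop])
    have hcons : π (ω.drop a) = s b * π (ω.drop (a + 1)) := by
      rw [hdrop, cs.wordProd_cons]
    have hlt2 : ℓ (s b * π (ω.drop (a + 1))) < ℓ (π (ω.drop (a + 1))) := by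
      have hd := cs.length_simple_mul (π (ω.drop (a + 1))) b
      rw [← hcons] at hd
      rw [← hcons]
      omega
    obtain ⟨ω'', hlen'', hsub'', heq''⟩ := exchange_left_word cs b hlt2
    have hπ : π (ω.take a ++ ω'') = π ω := by
      rw [cs.wordProd_append, ← heq'', ← hcons, ← cs.wordProd_append, List.take_append_drop]
    have hlen3 : (ω.take a ++ ω'').length < ω.length := by
      rw [List.length_append, List.length_take]
      rw [List.length_drop] at hlen''
      omega
    obtain ⟨ω', hsub', hred', heq'⟩ := IH _ hlen3 (ω.take a ++ ω'') rfl
    refine ⟨ω', ?_, hred', by rw [heq', hπ]⟩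
    intro b hb
    rcases List.mem_append.mp (hsub' b hb) with h | h
    · exact List.mem_of_mem_take h
    · exact List.mem_of_mem_drop (hsub'' b h)

lemma exists_reduced_word_subset {J : Set B} {u : W} (hu : u ∈ parabolic cs J) :
    ∃ ω : List B, (∀ b ∈ ω, b ∈ J) ∧ cs.IsReduced ω ∧ u = π ω := by
  obtain ⟨ω, hsub, rfl⟩ := exists_word_subset cs hu
  obtain ⟨ω', hsub', hred', heq'⟩ := reduce_word cs ω
  exact ⟨ω', fun b hb => hsub b (hsub' b hb), hred', heq'.symm⟩

-- ### all elements of a parabolic generated by descents are below `m`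

lemma rweak_of_mem_parabolic {K : Set B} {m : W}
    (hdesc : ∀ j ∈ K, ℓ (s j * m) < ℓ m) :
    ∀ u ∈ parabolic cs K, rweakLE cs u m := by
  intro u hu
  obtain ⟨ω, hsub, hred, rfl⟩ := exists_reduced_word_subset cs hu
  clear hu
  induction ω with
  | nil => simpa using rweakLE_one cs m
  | cons i ω ih =>
    have htail : cs.IsReduced ω := by
      have := hred.drop 1
      simpa using this
    have hIH := ih (fun b hb => hsub b (List.mem_cons_of_mem i hb)) htail
    have hsu : ℓ (π ω) < ℓ (s i * π ω) := by
      have h1 : ℓ (s i * π ω) = ω.length + 1 := by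
        have h := hred
        unfold CoxeterSystem.IsReduced at h
        rw [cs.wordProd_cons] at h
        simpa using h
      have h2 : ℓ (π ω) = ω.length := htail
      omega
    have := lifting cs hsu (hdesc i (hsub i (List.mem_cons_self (a := i) (l := ω)))) hIH
    rwa [cs.wordProd_cons]

-- ### finiteness of weak order ideals

lemma finite_rweak_ideal (w : W) : {u | rweakLE cs u w}.Finite := by
  generalize hn : ℓ w = n
  induction n using Nat.strong_induction_on generalizing w with
  | _ n IH =>
  obtain ⟨ω, hred, hw⟩ := cs.exists_reduced_word' w
  have hcover : {u | rweakLE cs u w} ⊆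
      {w} ∪ ⋃ j ∈ Finset.range ω.length,
        {u | rweakLE cs u (π ((ω.reverse.eraseIdx j).reverse))} := by
    intro u hu
    simp only [Set.mem_setOf_eq] at hu
    by_cases huw : u = w
    · exact Or.inl (by simp [huw])
    · right
      have hr : 0 < ℓ (u⁻¹ * w) := by
        rcases Nat.eq_zero_or_pos (ℓ (u⁻¹ * w)) with h0 | h
        · exact absurd (by
            have h1 := cs.length_eq_zero_iff.mp h0
            have : u * (u⁻¹ * w) = u * 1 := by rw [h1]
            rw [mul_one] at this
            rw [← this]; group) huw
        · exact h
      obtain ⟨β, hβred, hβ⟩ := cs.exists_reduced_word' (u⁻¹ * w)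
      have hβlen : ℓ (u⁻¹ * w) = β.length := by rw [hβ]; exact hβred
      have hβne : β ≠ [] := by
        intro h
        rw [h, List.length_nil] at hβlen
        omega
      set bb := β.getLast hβne with hbb
      have hsplit : β.dropLast ++ [bb] = β := List.dropLast_append_getLast hβne
      have hdl_len : ℓ (π β.dropLast) ≤ β.length - 1 := by
        calc ℓ (π β.dropLast) ≤ β.dropLast.length := cs.length_wordProd_le _
          _ = β.length - 1 := List.length_dropLast (xs := β)
      set m' := w * s bb with hm'
      have huβ : w = u * π β := by rw [← hβ]; group
      have hβprod : π β = π β.dropLast * s bb := by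
        conv_lhs => rw [← hsplit]
        rw [cs.wordProd_append, cs.wordProd_singleton]
      have hm'eq : m' = u * π β.dropLast := by
        rw [hm', huβ, hβprod, ← mul_assoc, cs.simple_mul_simple_cancel_right]
      have hwm' : w = m' * s bb := by rw [hm', cs.simple_mul_simple_cancel_right]
      have hub : ℓ m' ≤ ℓ u + (β.length - 1) := by
        rw [hm'eq]
        have := cs.length_mul_le u (π β.dropLast)
        omega
      have hlb : ℓ w ≤ ℓ m' + 1 := by
        rw [hwm']
        have := cs.length_mul_le m' (s bb)
        rw [cs.length_simple] at this
        exact this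
      have hu' : ℓ u + β.length = ℓ w := by
        unfold rweakLE at hu
        omega
      have hm'len : ℓ m' + 1 = ℓ w := by omega
      have hum' : rweakLE cs u m' := by
        unfold rweakLE
        have he : u⁻¹ * m' = π β.dropLast := by rw [hm'eq]; group
        have tri : ℓ m' ≤ ℓ u + ℓ (u⁻¹ * m') := by
          have := cs.length_mul_le u (u⁻¹ * m')
          rw [show u * (u⁻¹ * m') = m' by group] at this
          exact this
        rw [he] at tri ⊢
        omega
      have hrefl : cs.IsReflection (w * s bb * w⁻¹) := (cs.isReflection_simple bb).conj w
      have htw : (w * s bb * w⁻¹) * w = m' := by rw [hm']; group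
      have hlt : ℓ ((w * s bb * w⁻¹) * π ω) < ℓ (π ω) := by
        rw [← hw, htw]
        omega
      obtain ⟨j, hj, heq⟩ := strong_exchange_left cs ω (w * s bb * w⁻¹) hrefl hlt
      have hm'form : m' = π ((ω.reverse.eraseIdx j).reverse) := by
        rw [← heq, ← hw, htw]
      refine Set.mem_biUnion (by simpa using hj : j ∈ Finset.range ω.length) ?_
      show rweakLE cs u (π ((ω.reverse.eraseIdx j).reverse))
      rw [← hm'form]
      exact hum'
  apply Set.Finite.subset ?_ hcover
  apply Set.Finite.union (Set.finite_singleton w)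
  apply Set.Finite.biUnion (Finset.range ω.length).finite_toSet
  intro j hj
  have hjlt : j < ω.length := Finset.mem_range.mp hj
  apply IH (ℓ (π ((ω.reverse.eraseIdx j).reverse))) ?_ _ rfl
  have h1 := cs.length_wordProd_le ((ω.reverse.eraseIdx j).reverse)
  have h2 : ((ω.reverse.eraseIdx j).reverse).length = ω.length - 1 := by
    rw [List.length_reverse, List.length_eraseIdx, if_pos (by simpa using hjlt)]
    simp
  have h3 : ω.length = n := by
    rw [← hn, hw]
    exact hred.symm
  omega

end SEAux

/-- For each `w` in a Coxeter group, among the longest elements `w₀(J)` of finite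
standard parabolic subgroups lying below `w` in weak Bruhat order there is a unique
maximal one, namely `w₀(J₀)` where `J₀ = {j : s_j ≤ w}`: it is the maximum of this
collection of elements. -/
theorem stmt_4 {B W : Type*} [Group W] {M : CoxeterMatrix B}
    (cs : CoxeterSystem M W) (w : W) :
    ∃ m : W,
      isLongestOf cs {j | rweakLE cs (cs.simple j) w} m ∧
      rweakLE cs m w ∧
      (∀ (m' : W) (J' : Set B), isLongestOf cs J' m' → rweakLE cs m' w →
        rweakLE cs m' m) ∧
      -- uniqueness of a maximal such element
      (∀ (m' : W) (J' : Set B), isLongestOf cs J' m' → rweakLE cs m' w →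
        (∀ (m'' : W) (J'' : Set B), isLongestOf cs J'' m'' → rweakLE cs m'' w →
          rweakLE cs m' m'' → m'' = m') → m' = m) := by
  classical
  set D : Set B := {j | rweakLE cs (cs.simple j) w} with hD
  have hSfin : {u : W | u ∈ parabolic cs D ∧ rweakLE cs u w}.Finite :=
    (SEAux.finite_rweak_ideal cs w).subset (fun u hu => hu.2)
  have hSne : (1 : W) ∈ {u : W | u ∈ parabolic cs D ∧ rweakLE cs u w} :=
    ⟨one_mem _, SEAux.rweakLE_one cs w⟩
  obtain ⟨m, hmF, hmax⟩ := Finset.exists_max_image hSfin.toFinset cs.length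
    ⟨1, hSfin.mem_toFinset.mpr hSne⟩
  rw [Set.Finite.mem_toFinset] at hmF
  obtain ⟨hmpar, hmw⟩ := hmF
  have hmax' : ∀ u, u ∈ parabolic cs D → rweakLE cs u w → cs.length u ≤ cs.length m := by
    intro u h1 h2
    exact hmax u (hSfin.mem_toFinset.mpr ⟨h1, h2⟩)
  have hdesc : ∀ j ∈ D, cs.length (cs.simple j * m) < cs.length m := by
    intro j hj
    rcases cs.length_simple_mul m j with h | h
    · exfalso
      have hjw : cs.length (cs.simple j * w) < cs.length w :=
        (SEAux.rweakLE_simple_iff cs j w).mp hj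
      have hlift := SEAux.lifting cs (by omega) hjw hmw
      have hmem2 : cs.simple j * m ∈ parabolic cs D :=
        mul_mem (Subgroup.subset_closure ⟨j, hj, rfl⟩) hmpar
      have := hmax' _ hmem2 hlift
      omega
    · omega
  have hall : ∀ u ∈ parabolic cs D, rweakLE cs u m := SEAux.rweak_of_mem_parabolic cs hdesc
  have hlongest : isLongestOf cs D m := by
    refine ⟨hmpar, ?_, ?_⟩
    · exact (SEAux.finite_rweak_ideal cs m).subset (fun u hu => hall u hu)
    · intro u hu
      exact SEAux.rweakLE.length_le cs (hall u hu)
  have hkey : ∀ (m' : W) (J' : Set B), isLongestOf cs J' m' → rweakLE cs m' w →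
      rweakLE cs m' m := by
    intro m' J' hm' hm'w
    have hsub : J' ⊆ D := by
      intro j hj
      have hdj : cs.length (cs.simple j * m') < cs.length m' :=
        SEAux.left_descent_of_isLongest cs hm' hj
      have h1 : rweakLE cs (cs.simple j) m' := (SEAux.rweakLE_simple_iff cs j m').mpr hdj
      exact SEAux.rweakLE_trans cs h1 hm'w
    have hmem : m' ∈ parabolic cs D :=
      Subgroup.closure_mono (Set.image_mono hsub) hm'.1
    exact hall m' hmem
  refine ⟨m, hlongest, hmw, hkey, ?_⟩
  intro m' J' hm' hm'w hmaximal
  exact (hmaximal m D hlongest hmw (hkey m' J' hm' hm'w)).symm
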